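/- Let ⋆ be the unique binary operation on {1,...,N} satisfying p ⋆ 1 = p + 1 mod N and p ⋆ (q ⋆ 1) = (p ⋆ q) ⋆ (p ⋆ 1). Then N ⋆ q = q for all q in {1,...,N}. -/
import Mathlib


/-- The defining axioms of the Laver-type operation on {1,...,N}: it maps the set into
itself, satisfies p ⋆ 1 = p+1 mod N (i.e. p % N + 1), and
p ⋆ (q ⋆ 1) = (p ⋆ q) ⋆ (p ⋆ 1). -/
def LaverAxioms (N : ℕ) (star : ℕ → ℕ → ℕ) : Prop :=
  (∀ p q, p ∈ Set.Icc 1 N → q ∈ Set.Icc 1 N → star p q ∈ Set.Icc 1 N) ∧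
  (∀ p ∈ Set.Icc 1 N, star p 1 = p % N + 1) ∧
  (∀ p q, p ∈ Set.Icc 1 N → q ∈ Set.Icc 1 N →
    star p (star q 1) = star (star p q) (star p 1))

/-- N ⋆ q = q for all q in {1,...,N}. -/
theorem laver_top_row (N : ℕ) (hN : 0 < N) (star : ℕ → ℕ → ℕ)
    (h : LaverAxioms N star) :
    ∀ q ∈ Set.Icc 1 N, star N q = q := by
  obtain ⟨h1, h2, h3⟩ := h
  have hNmem : N ∈ Set.Icc 1 N := ⟨hN, le_refl N⟩
  have hN1 : star N 1 = 1 := by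
    rw [h2 N hNmem, Nat.mod_self]
  have key : ∀ q, 1 ≤ q → q ≤ N → star N q = q := by
    intro q
    induction q with
    | zero => intro h; omega
    | succ n ih =>
      intro h1n hnN
      rcases Nat.eq_or_lt_of_le h1n with heq | hlt
      · rw [← heq]; exact hN1
      · have hn1 : 1 ≤ n := by omega
        have hnN' : n ≤ N := by omega
        have hnmem : n ∈ Set.Icc 1 N := ⟨hn1, hnN'⟩
        have hstar : star n 1 = n + 1 := by
          rw [h2 n hnmem, Nat.mod_eq_of_lt (by omega)]
        have := h3 N n hNmem hnmem
        rw [hstar, hN1, ih hn1 hnN'] at this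
        rw [this, hstar]
  intro q hq
  exact key q hq.1 hq.2
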